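/- arXiv:2508.21241 — 3 statements merged into one kernel-verified Lean document; each statement's English description precedes it below -/
import Mathlib

section
/- Let ψ be a Möbius transformation of the Riemann sphere with ψ({0,∞}) ≠ {0,∞}, and for a, a' ∈ ℂ× with ψ(a') ∉ {0,∞}, define ψ_{a,a'}(z) = ψ(az)/ψ(a'). If (a₁, a₁') ≠ (a₂, a₂') (with all ψ(aᵢ') ∉ {0,∞}), then ψ_{a₁,a₁'} ≠ ψ_{a₂,a₂'} as Möbius transformations. -/
open OnePoint

/-- The Möbius transformation `z ↦ (az+b)/(cz+d)` as a self-map of the Riemann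
sphere `ℂ ∪ {∞}`. -/
noncomputable def mobius (a b c d : ℂ) : OnePoint ℂ → OnePoint ℂ := fun z =>
  match z with
  | ∞ => if c = 0 then ∞ else ((a / c : ℂ) : OnePoint ℂ)
  | (x : ℂ) => if c * x + d = 0 then ∞ else (((a * x + b) / (c * x + d) : ℂ) : OnePoint ℂ)

/-- Multiplication of a point of the Riemann sphere by a nonzero constant `k`
(fixing `∞`). -/
def sphereMul (k : ℂ) : OnePoint ℂ → OnePoint ℂ := fun z =>
  match z with
  | ∞ => ∞
  | (x : ℂ) => ((k * x : ℂ) : OnePoint ℂ)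

/-- Division of a point of the Riemann sphere by a nonzero constant `k`
(fixing `∞`). -/
noncomputable def sphereDivConst (z : OnePoint ℂ) (k : ℂ) : OnePoint ℂ :=
  match z with
  | ∞ => ∞
  | (x : ℂ) => ((x / k : ℂ) : OnePoint ℂ)

lemma mobius_coe (a b c d x : ℂ) : mobius a b c d (x : OnePoint ℂ) =
    if c * x + d = 0 then ∞ else (((a * x + b) / (c * x + d) : ℂ) : OnePoint ℂ) := rfl

lemma mobius_infty (a b c d : ℂ) : mobius a b c d ∞ =
    if c = 0 then ∞ else ((a / c : ℂ) : OnePoint ℂ) := rfl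

lemma sphereMul_coe (m x : ℂ) : sphereMul m (x : OnePoint ℂ) = ((m * x : ℂ) : OnePoint ℂ) := rfl
lemma sphereMul_infty (m : ℂ) : sphereMul m ∞ = ∞ := rfl
lemma sphereDivConst_coe (x k : ℂ) : sphereDivConst (x : OnePoint ℂ) k = ((x / k : ℂ) : OnePoint ℂ) := rfl
lemma sphereDivConst_infty (k : ℂ) : sphereDivConst ∞ k = ∞ := rfl

lemma sphereDivConst_inj (k : ℂ) (x y : OnePoint ℂ)
    (h : sphereDivConst x k = sphereDivConst y k) (hk : k ≠ 0) : x = y := by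
  cases x <;> cases y <;> simp [sphereDivConst] at h ⊢
  field_simp at h; exact h

lemma mobius_inj (a b c d : ℂ) (hdet : a * d - b * c ≠ 0) (x y : ℂ)
    (h : mobius a b c d (x : OnePoint ℂ) = mobius a b c d (y : OnePoint ℂ)) : x = y := by
  rw [mobius_coe, mobius_coe] at h
  by_cases hx : c * x + d = 0 <;> by_cases hy : c * y + d = 0 <;>
    simp [hx, hy] at h
  · have hc : c ≠ 0 := by
      rintro rfl
      simp only [zero_mul, zero_add] at hx
      rw [hx] at hdet
      simp at hdet
    have : c * x = c * y := by rw [show c*x = -d by linear_combination hx,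
      show c*y = -d by linear_combination hy]
    exact mul_left_cancel₀ hc this
  · have h2 : (a * x + b) * (c * y + d) = (a * y + b) * (c * x + d) := by
      rw [div_eq_div_iff hx hy] at h
      linear_combination h
    have : (a * d - b * c) * (x - y) = 0 := by linear_combination h2
    rcases mul_eq_zero.mp this with h3 | h3
    · exact absurd h3 hdet
    · exact sub_eq_zero.mp h3


/-- Let `ψ` be a Möbius transformation with `ψ({0,∞}) ≠ {0,∞}`, and
for `a ∈ ℂ×`, `a'` with `ψ(a') ∉ {0,∞}`, set `ψ_{a,a'}(z) = ψ(a z)/ψ(a')`.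
If `(a₁,a₁') ≠ (a₂,a₂')` then `ψ_{a₁,a₁'} ≠ ψ_{a₂,a₂'}` as functions on the
Riemann sphere. -/
theorem mobius_family_injective (a b c d : ℂ) (hdet : a * d - b * c ≠ 0)
    (ψ : OnePoint ℂ → OnePoint ℂ) (hψ : ψ = mobius a b c d)
    (hfix : ψ '' {((0 : ℂ) : OnePoint ℂ), ∞} ≠ {((0 : ℂ) : OnePoint ℂ), ∞})
    (a₁ a₂ a₁' a₂' : ℂ) (ha₁ : a₁ ≠ 0) (ha₂ : a₂ ≠ 0)
    (k₁ k₂ : ℂ) (hk₁ : k₁ ≠ 0) (hk₂ : k₂ ≠ 0)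
    (hψ₁ : ψ ((a₁' : OnePoint ℂ)) = (k₁ : OnePoint ℂ))
    (hψ₂ : ψ ((a₂' : OnePoint ℂ)) = (k₂ : OnePoint ℂ))
    (hne : (a₁, a₁') ≠ (a₂, a₂')) :
    (fun z => sphereDivConst (ψ (sphereMul a₁ z)) k₁) ≠
      (fun z => sphereDivConst (ψ (sphereMul a₂ z)) k₂) := by
  subst hψ
  intro heq
  apply hne
  -- Step 1: k₁ = k₂
  have hkk : k₁ = k₂ := by
    by_cases hc : c = 0
    · -- c = 0 : d ≠ 0 from det, b ≠ 0 from hfix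
      have hd : d ≠ 0 := by
        intro h; rw [hc, h] at hdet; simp at hdet
      have hb : b ≠ 0 := by
        intro hb
        apply hfix
        rw [Set.image_pair]
        rw [mobius_coe, mobius_infty]
        simp [hc, hd, hb]
      have h0 := congrFun heq ((0 : ℂ) : OnePoint ℂ)
      simp only [sphereMul_coe, mul_zero] at h0
      rw [mobius_coe] at h0
      simp only [mul_zero, zero_add, hd, if_false, if_neg hd] at h0
      rw [sphereDivConst_coe, sphereDivConst_coe, OnePoint.coe_eq_coe] at h0
      field_simp at h0
      exact h0.symm
    · by_cases ha : a = 0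
      · -- a = 0, c ≠ 0 : b ≠ 0 from det, d ≠ 0 from hfix
        have hb : b ≠ 0 := by
          intro h; rw [ha, h] at hdet; simp at hdet
        have hd : d ≠ 0 := by
          intro hd
          apply hfix
          rw [Set.image_pair]
          rw [mobius_coe, mobius_infty]
          simp [hc, hd, ha, Set.pair_comm]
        have h0 := congrFun heq ((0 : ℂ) : OnePoint ℂ)
        simp only [sphereMul_coe, mul_zero] at h0
        rw [mobius_coe] at h0
        simp only [mul_zero, zero_add, if_false, if_neg hd] at h0
        rw [sphereDivConst_coe, sphereDivConst_coe, OnePoint.coe_eq_coe] at h0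
        field_simp at h0
        exact h0.symm
      · -- a ≠ 0, c ≠ 0 : evaluate at ∞
        have h0 := congrFun heq ∞
        simp only [sphereMul_infty] at h0
        rw [mobius_infty, if_neg hc] at h0
        rw [sphereDivConst_coe, sphereDivConst_coe, OnePoint.coe_eq_coe] at h0
        field_simp at h0
        exact h0.symm
  -- Step 2: a₁ = a₂ from evaluating at 1
  have h1 := congrFun heq ((1 : ℂ) : OnePoint ℂ)
  simp only [sphereMul_coe, mul_one] at h1
  rw [hkk] at h1
  have hA : a₁ = a₂ := mobius_inj a b c d hdet _ _ (sphereDivConst_inj k₂ _ _ h1 hk₂)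
  have hA' : a₁' = a₂' := by
    apply mobius_inj a b c d hdet
    rw [hψ₁, hψ₂, hkk]
  rw [hA, hA']
end

section
/- Let A₁, A₂, A₃ be nonempty finite subsets of ℂ× such that A₁·A₂ ⊆ A₃⁻¹, A₂·A₃ ⊆ A₁⁻¹, and A₃·A₁ ⊆ A₂⁻¹. Then for any x, x', x'' ∈ A₁, we have x''x/x' ∈ A₁; consequently A₁ is a coset λH of a finite subgroup H of ℂ×. -/
open Finset Pointwise

/-- If `A₁, A₂, A₃ ⊆ ℂ×` are nonempty finite sets with
`A₁·A₂ ⊆ A₃⁻¹`, `A₂·A₃ ⊆ A₁⁻¹`, `A₃·A₁ ⊆ A₂⁻¹`, then `x''x/x' ∈ A₁` for all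
`x, x', x'' ∈ A₁`; consequently `A₁` is a coset `λH` of a finite subgroup
`H ≤ ℂ×`. -/
theorem triple_product_coset (A₁ A₂ A₃ : Finset ℂˣ)
    (hne₁ : A₁.Nonempty) (hne₂ : A₂.Nonempty) (hne₃ : A₃.Nonempty)
    (h12 : A₁ * A₂ ⊆ A₃⁻¹) (h23 : A₂ * A₃ ⊆ A₁⁻¹) (h31 : A₃ * A₁ ⊆ A₂⁻¹) :
    (∀ x ∈ A₁, ∀ x' ∈ A₁, ∀ x'' ∈ A₁, x'' * x / x' ∈ A₁) ∧
    ∃ (H : Subgroup ℂˣ) (l : ℂˣ), (H : Set ℂˣ).Finite ∧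
      (A₁ : Set ℂˣ) = (fun h => l * h) '' (H : Set ℂˣ) := by
  obtain ⟨y, hy⟩ := hne₂
  have key : ∀ x ∈ A₁, ∀ x' ∈ A₁, ∀ x'' ∈ A₁, x'' * x / x' ∈ A₁ := by
    intro x hx x' hx' x'' hx''
    have h1 : (x * y)⁻¹ ∈ A₃ := by
      have := h12 (Finset.mul_mem_mul hx hy)
      rwa [Finset.mem_inv'] at this
    have h2 : x'⁻¹ * x * y ∈ A₂ := by
      have := h31 (Finset.mul_mem_mul h1 hx')
      rw [Finset.mem_inv'] at this
      convert this using 1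
      group
    have h3 : (x'' * (x'⁻¹ * x * y))⁻¹ ∈ A₃ := by
      have := h12 (Finset.mul_mem_mul hx'' h2)
      rwa [Finset.mem_inv'] at this
    have h4 := h23 (Finset.mul_mem_mul hy h3)
    rw [Finset.mem_inv'] at h4
    rw [show x'' * x / x' = (y * (x'' * (x'⁻¹ * x * y))⁻¹)⁻¹ from by
      rw [Units.ext_iff]; push_cast; field_simp]
    exact h4
  refine ⟨key, ?_⟩
  obtain ⟨a, ha⟩ := hne₁
  refine ⟨{ carrier := {h | a * h ∈ A₁}
            one_mem' := by simpa using ha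
            mul_mem' := by
              intro p q hp hq
              simp only [Set.mem_setOf_eq] at *
              have := key (a * q) hq (a) ha (a * p) hp
              rw [show a * (p * q) = a * p * (a * q) / a from by
                rw [Units.ext_iff]; push_cast; field_simp]
              exact this
            inv_mem' := by
              intro p hp
              simp only [Set.mem_setOf_eq] at *
              have := key a ha (a * p) hp a ha
              rw [show a * p⁻¹ = a * a / (a * p) from by
                rw [Units.ext_iff]; push_cast; field_simp]
              exact this }, a, ?_, ?_⟩
  · apply Set.Finite.subset (Set.Finite.image (fun b => a⁻¹ * b) A₁.finite_toSet)
    intro h hh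
    exact ⟨a * h, hh, by group⟩
  · ext b
    simp only [Set.mem_image, Finset.mem_coe]
    constructor
    · intro hb
      exact ⟨a⁻¹ * b, by simpa using hb, by group⟩
    · rintro ⟨h, hh, rfl⟩
      exact hh
end

section
/- Let A₁, A₂, A₃ be nonempty finite subsets of ℂ× with A₁·A₂ ⊆ A₃⁻¹, A₂·A₃ ⊆ A₁⁻¹, and A₃·A₁ ⊆ A₂⁻¹, and suppose these inclusions are equalities of cardinality, i.e. |A₁| = |A₂| = |A₃|. Then there exist a finite subgroup H ≤ ℂ× and λ₁, λ₂, λ₃ ∈ ℂ× with λ₁λ₂λ₃ = 1 such that Aⱼ = λⱼH for j = 1, 2, 3. -/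
open Finset Pointwise

lemma aux_coset_eq {A B C : Finset ℂˣ} {a : ℂˣ} (ha : a ∈ A) (h : A * B ⊆ C)
    (hc : B.card = C.card) : {a} * B = C := by
  apply Finset.eq_of_subset_of_card_le
  · exact (Finset.mul_subset_mul_right (Finset.singleton_subset_iff.2 ha)).trans h
  · rw [Finset.card_singleton_mul, hc]

/-- If `A₁, A₂, A₃ ⊆ ℂ×` are nonempty finite sets with
`A₁·A₂ ⊆ A₃⁻¹`, `A₂·A₃ ⊆ A₁⁻¹`, `A₃·A₁ ⊆ A₂⁻¹` and `|A₁| = |A₂| = |A₃|`, then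
there are a finite subgroup `H ≤ ℂ×` and `λ₁, λ₂, λ₃ ∈ ℂ×` with
`λ₁λ₂λ₃ = 1` and `Aⱼ = λⱼ H` for each `j`. -/
theorem triple_product_cosets_common_subgroup (A₁ A₂ A₃ : Finset ℂˣ)
    (hne₁ : A₁.Nonempty) (hne₂ : A₂.Nonempty) (hne₃ : A₃.Nonempty)
    (h12 : A₁ * A₂ ⊆ A₃⁻¹) (h23 : A₂ * A₃ ⊆ A₁⁻¹) (h31 : A₃ * A₁ ⊆ A₂⁻¹)
    (hcard₁₂ : A₁.card = A₂.card) (hcard₂₃ : A₂.card = A₃.card) :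
    ∃ (H : Subgroup ℂˣ) (l₁ l₂ l₃ : ℂˣ), (H : Set ℂˣ).Finite ∧
      l₁ * l₂ * l₃ = 1 ∧
      (A₁ : Set ℂˣ) = (fun h => l₁ * h) '' (H : Set ℂˣ) ∧
      (A₂ : Set ℂˣ) = (fun h => l₂ * h) '' (H : Set ℂˣ) ∧
      (A₃ : Set ℂˣ) = (fun h => l₃ * h) '' (H : Set ℂˣ) := by
  obtain ⟨a, ha⟩ := hne₁
  obtain ⟨b, hb⟩ := hne₂
  set c : ℂˣ := (a * b)⁻¹ with hcdef
  have hcmem : c ∈ A₃ := by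
    have := h12 (Finset.mul_mem_mul ha hb)
    rwa [Finset.mem_inv'] at this
  -- the three coset identities
  have e12 : ({a} : Finset ℂˣ) * A₂ = A₃⁻¹ :=
    aux_coset_eq ha h12 (by rw [Finset.card_inv]; exact hcard₂₃)
  have e23 : ({b} : Finset ℂˣ) * A₃ = A₁⁻¹ :=
    aux_coset_eq hb h23 (by rw [Finset.card_inv]; exact (hcard₁₂.trans hcard₂₃).symm)
  have e31 : ({c} : Finset ℂˣ) * A₁ = A₂⁻¹ :=
    aux_coset_eq hcmem h31 (by rw [Finset.card_inv]; exact hcard₁₂)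
  -- the product identities
  have E12 : A₁ * A₂ = A₃⁻¹ := by
    refine subset_antisymm h12 ?_
    rw [← e12]
    exact Finset.mul_subset_mul_right (Finset.singleton_subset_iff.2 ha)
  have E23 : A₂ * A₃ = A₁⁻¹ := by
    refine subset_antisymm h23 ?_
    rw [← e23]
    exact Finset.mul_subset_mul_right (Finset.singleton_subset_iff.2 hb)
  have E31 : A₃ * A₁ = A₂⁻¹ := by
    refine subset_antisymm h31 ?_
    rw [← e31]
    exact Finset.mul_subset_mul_right (Finset.singleton_subset_iff.2 hcmem)
  set K : Finset ℂˣ := A₁⁻¹ * A₁ with hKdef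
  have hK2 : K = A₂⁻¹ * A₂ := by
    rw [hKdef, ← E23, mul_assoc, E31, mul_comm]
  have hK3 : K = A₃⁻¹ * A₃ := by
    rw [hKdef, mul_comm, ← E23, ← mul_assoc, E12]
  have hKK : K * K = K := by
    calc K * K = (A₁⁻¹ * A₁) * (A₂⁻¹ * A₂) := by rw [← hKdef, ← hK2]
    _ = (A₁⁻¹ * A₂⁻¹) * (A₁ * A₂) := mul_mul_mul_comm _ _ _ _
    _ = (A₁ * A₂)⁻¹ * (A₁ * A₂) := by rw [mul_inv]
    _ = A₃⁻¹⁻¹ * A₃⁻¹ := by rw [E12]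
    _ = A₃⁻¹ * A₃ := by rw [inv_inv, mul_comm]
    _ = K := hK3.symm
  have hone : (1 : ℂˣ) ∈ K := by
    have : a⁻¹ * a ∈ K := Finset.mul_mem_mul (Finset.inv_mem_inv ha) ha
    rwa [inv_mul_cancel] at this
  have hKinv : K⁻¹ = K := by
    rw [hKdef, mul_inv, inv_inv, mul_comm]
  refine ⟨{ carrier := ↑K
            mul_mem' := fun hx hy => by
              simp only [Finset.mem_coe] at *
              rw [← hKK]; exact Finset.mul_mem_mul hx hy
            one_mem' := hone
            inv_mem' := fun hx => by
              simp only [Finset.mem_coe] at *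
              rw [← hKinv]; exact Finset.inv_mem_inv hx }, a, b, c, ?_, ?_, ?_, ?_, ?_⟩
  · exact K.finite_toSet
  · rw [hcdef]; exact mul_inv_cancel _
  · have cos1 : ({a} : Finset ℂˣ) * K = A₁ := by
      calc ({a} : Finset ℂˣ) * K = {a} * (A₂ * A₃ * A₁) := by rw [hKdef, ← E23]
      _ = ({a} * A₂) * (A₃ * A₁) := by rw [mul_assoc, ← mul_assoc ({a} : Finset ℂˣ)]
      _ = A₃⁻¹ * A₂⁻¹ := by rw [e12, E31]
      _ = (A₂ * A₃)⁻¹ := by rw [mul_inv, mul_comm]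
      _ = A₁ := by rw [E23, inv_inv]
    rw [show ((_ : Subgroup ℂˣ) : Set ℂˣ) = ↑K from rfl, ← cos1]
    ext x
    simp [Finset.mem_mul, eq_comm]
  · have cos2 : ({b} : Finset ℂˣ) * K = A₂ := by
      calc ({b} : Finset ℂˣ) * K = {b} * (A₃ * A₁ * A₂) := by rw [hK2, ← E31]
      _ = ({b} * A₃) * (A₁ * A₂) := by rw [mul_assoc, ← mul_assoc ({b} : Finset ℂˣ)]
      _ = A₁⁻¹ * A₃⁻¹ := by rw [e23, E12]
      _ = (A₃ * A₁)⁻¹ := by rw [mul_inv, mul_comm]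
      _ = A₂ := by rw [E31, inv_inv]
    rw [show ((_ : Subgroup ℂˣ) : Set ℂˣ) = ↑K from rfl, ← cos2]
    ext x
    simp [Finset.mem_mul, eq_comm]
  · have cos3 : ({c} : Finset ℂˣ) * K = A₃ := by
      calc ({c} : Finset ℂˣ) * K = {c} * (A₁ * A₂ * A₃) := by rw [hK3, ← E12]
      _ = ({c} * A₁) * (A₂ * A₃) := by rw [mul_assoc, ← mul_assoc ({c} : Finset ℂˣ)]
      _ = A₂⁻¹ * A₁⁻¹ := by rw [e31, E23]
      _ = (A₁ * A₂)⁻¹ := by rw [mul_inv, mul_comm]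
      _ = A₃ := by rw [E12, inv_inv]
    rw [show ((_ : Subgroup ℂˣ) : Set ℂˣ) = ↑K from rfl, ← cos3]
    ext x
    simp [Finset.mem_mul, eq_comm]
end
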